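/- arXiv:2107.00290 — 2 statements merged into one kernel-verified Lean document; each statement's English description precedes it below -/
import Mathlib

section
/- For the half Poisson kernel Ω(x,y) = (1/2) · sin(πx) / (cosh(πy) + cos(πx)), one has ∫_{-∞}^{∞} Ω(x,t) dt = x for every 0 ≤ x < 1. -/
open Real

/-- The "half" Poisson kernel of the unit strip. -/
noncomputable def halfPoisson (x y : ℝ) : ℝ :=
  (1 / 2) * (Real.sin (Real.pi * x) / (Real.cosh (Real.pi * y) + Real.cos (Real.pi * x)))

open MeasureTheory Set Filter in
private lemma hp_deriv (x : ℝ) (hx0 : 0 < x) (hx1 : x < 1) (t : ℝ) :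
    HasDerivAt (fun t : ℝ => (1/π) * Real.arctan (Real.tan (π*x/2) *
      (Real.sinh (π*t/2) / Real.cosh (π*t/2)))) (halfPoisson x t) t := by
  simp only [halfPoisson]
  have hπ := Real.pi_pos
  have hch : Real.cosh (π*t/2) ≠ 0 := (Real.cosh_pos _).ne'
  have hcos : 0 < Real.cos (π*x/2) := by
    apply Real.cos_pos_of_mem_Ioo
    constructor <;> nlinarith
  have hs : HasDerivAt (fun t : ℝ => π*t/2) (π/2) t := by
    simpa using ((hasDerivAt_id t).const_mul π).div_const 2
  have hsinh : HasDerivAt (fun t : ℝ => Real.sinh (π*t/2)) (Real.cosh (π*t/2) * (π/2)) t :=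
    (Real.hasDerivAt_sinh _).comp t hs
  have hcosh : HasDerivAt (fun t : ℝ => Real.cosh (π*t/2)) (Real.sinh (π*t/2) * (π/2)) t :=
    (Real.hasDerivAt_cosh _).comp t hs
  have hdiv := hsinh.div hcosh hch
  have hmul := hdiv.const_mul (Real.tan (π*x/2))
  have harc := (Real.hasDerivAt_arctan _).comp t hmul
  have hfin := harc.const_mul (1/π)
  refine hfin.congr_deriv ?_
  symm
  simp only [Pi.div_apply, Function.comp_apply]
  set S := Real.sin (π*x/2) with hS
  set C := Real.cos (π*x/2) with hC
  set sh := Real.sinh (π*t/2) with hsh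
  set ch := Real.cosh (π*t/2) with hchd
  have htan : Real.tan (π*x/2) = S / C := Real.tan_eq_sin_div_cos _
  have hsin2 : Real.sin (π*x) = 2 * S * C := by
    rw [show π*x = 2*(π*x/2) by ring, Real.sin_two_mul]
  have hcos2 : Real.cos (π*x) = 2*C^2 - 1 := by
    rw [show π*x = 2*(π*x/2) by ring, Real.cos_two_mul]
  have hcosht : Real.cosh (π*t) = ch*ch + sh*sh := by
    rw [show π*t = π*t/2 + π*t/2 by ring, Real.cosh_add]
  have hpy : S^2 + C^2 = 1 := Real.sin_sq_add_cos_sq _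
  have hhy : ch^2 - sh^2 = 1 := Real.cosh_sq_sub_sinh_sq _
  rw [htan, hsin2, hcos2, hcosht]
  have h2 : (1 : ℝ) + (S/C * (sh/ch))^2 ≠ 0 := by positivity
  have hden2 : ch*ch + sh*sh + (2*C^2 - 1) ≠ 0 := by nlinarith [Real.cosh_pos (π*t/2)]
  have e1 : ch*ch + sh*sh + (2*C^2 - 1) = 2*(sh^2+C^2) := by linear_combination hhy
  have e2 : 1 + (S/C * (sh/ch))^2 = (sh^2+C^2) / (C^2*ch^2) := by
    field_simp; linear_combination C^2 * hhy + sh^2 * hpy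
  have e3 : ch * (π / 2) * ch - sh * (sh * (π / 2)) = π/2 := by linear_combination (π/2) * hhy
  have hp : sh^2 + C^2 ≠ 0 := by positivity
  rw [e1, e2, e3]
  field_simp

private lemma tanh_key (t : ℝ) :
    Real.sinh (π*t/2) / Real.cosh (π*t/2) = 1 - 2/(Real.exp (π*t) + 1) := by
  have he : Real.exp (π*t) = Real.exp (π*t/2) * Real.exp (π*t/2) := by
    rw [← Real.exp_add]; ring_nf
  have h1 : Real.exp (π*t/2) ≠ 0 := (Real.exp_pos _).ne'
  have h2 : Real.exp (π*t) + 1 ≠ 0 := by positivity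
  have h3 : Real.cosh (π*t/2) ≠ 0 := (Real.cosh_pos _).ne'
  rw [Real.sinh_eq, Real.cosh_eq, Real.exp_neg]
  rw [Real.cosh_eq, Real.exp_neg] at h3
  field_simp
  linear_combination (-2 : ℝ) * he

theorem stmt2 (x : ℝ) (hx0 : 0 ≤ x) (hx1 : x < 1) :
    ∫ t : ℝ, halfPoisson x t = x := by
  rcases eq_or_lt_of_le hx0 with h0 | h0
  · rw [← h0]; simp [halfPoisson]
  clear hx0
  open MeasureTheory Set Filter in
  have hπ := Real.pi_pos
  set F : ℝ → ℝ := fun t => (1/π) * Real.arctan (Real.tan (π*x/2) *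
      (Real.sinh (π*t/2) / Real.cosh (π*t/2))) with hF
  have hderiv : ∀ t, HasDerivAt F (halfPoisson x t) t := hp_deriv x h0 hx1
  have harctan : Real.arctan (Real.tan (π*x/2)) = π*x/2 :=
    Real.arctan_tan (by nlinarith) (by nlinarith)
  -- limit at +∞
  have hexp_top : Filter.Tendsto (fun t : ℝ => Real.exp (π*t)) Filter.atTop Filter.atTop :=
    Real.tendsto_exp_atTop.comp (Filter.Tendsto.const_mul_atTop hπ Filter.tendsto_id)
  have hfrac_top : Filter.Tendsto (fun t : ℝ => 2/(Real.exp (π*t) + 1)) Filter.atTop (nhds 0) :=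
    Filter.Tendsto.div_atTop tendsto_const_nhds
      (Filter.tendsto_atTop_add_const_right _ 1 hexp_top)
  have htop : Filter.Tendsto F Filter.atTop (nhds (x/2)) := by
    have h1 : Filter.Tendsto
        (fun t : ℝ => (1/π) * Real.arctan (Real.tan (π*x/2) * (1 - 2/(Real.exp (π*t) + 1))))
        Filter.atTop (nhds ((1/π) * Real.arctan (Real.tan (π*x/2) * (1 - 0)))) := by
      exact (((Real.continuous_arctan.tendsto _).comp
        ((tendsto_const_nhds.sub hfrac_top).const_mul _)).const_mul _)
    have h2 : (1/π) * Real.arctan (Real.tan (π*x/2) * (1 - 0)) = x/2 := by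
      rw [sub_zero, mul_one, harctan]; field_simp
    rw [h2] at h1
    refine h1.congr fun t => ?_
    rw [hF]; simp only [tanh_key t]
  -- limit at -∞
  have hexp_bot : Filter.Tendsto (fun t : ℝ => Real.exp (π*t)) Filter.atBot (nhds 0) :=
    Real.tendsto_exp_atBot.comp (Filter.Tendsto.const_mul_atBot hπ Filter.tendsto_id)
  have hbot : Filter.Tendsto F Filter.atBot (nhds (-(x/2))) := by
    have h1 : Filter.Tendsto
        (fun t : ℝ => (1/π) * Real.arctan (Real.tan (π*x/2) * (1 - 2/(Real.exp (π*t) + 1))))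
        Filter.atBot (nhds ((1/π) * Real.arctan (Real.tan (π*x/2) * (1 - 2/(0 + 1))))) := by
      have hfrac : Filter.Tendsto (fun t : ℝ => 2/(Real.exp (π*t) + 1)) Filter.atBot
          (nhds (2/(0+1))) := by
        exact tendsto_const_nhds.div (hexp_bot.add tendsto_const_nhds) (by norm_num)
      exact (((Real.continuous_arctan.tendsto _).comp
        ((tendsto_const_nhds.sub hfrac).const_mul _)).const_mul _)
    have h2 : (1/π) * Real.arctan (Real.tan (π*x/2) * (1 - 2/(0 + 1))) = -(x/2) := by
      norm_num [Real.arctan_neg, harctan]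
      field_simp
    rw [h2] at h1
    refine h1.congr fun t => ?_
    rw [hF]; simp only [tanh_key t]
  -- nonnegativity
  have hnn : ∀ t, 0 ≤ halfPoisson x t := by
    intro t
    have hsin : 0 ≤ Real.sin (π*x) := Real.sin_nonneg_of_nonneg_of_le_pi (by positivity)
      (by nlinarith)
    have hcos : -1 < Real.cos (π*x) := by
      have hc : 0 < Real.cos (π*x/2) :=
        Real.cos_pos_of_mem_Ioo ⟨by nlinarith, by nlinarith⟩
      have h2 : Real.cos (π*x) = 2*Real.cos (π*x/2)^2 - 1 := by
        have := Real.cos_two_mul (π*x/2)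
        rw [show (2:ℝ)*(π*x/2) = π*x by ring] at this
        exact this
      nlinarith
    have hden : 0 < Real.cosh (π*t) + Real.cos (π*x) := by
      have := Real.one_le_cosh (π*t); linarith
    unfold halfPoisson
    positivity
  -- integrability
  have hIoi : MeasureTheory.IntegrableOn (halfPoisson x) (Set.Ioi 0) := by
    exact MeasureTheory.integrableOn_Ioi_deriv_of_nonneg' (fun t _ => hderiv t)
      (fun t _ => hnn t) htop
  have hIci : MeasureTheory.IntegrableOn (halfPoisson x) (Set.Ici 0) := by
    rwa [integrableOn_Ici_iff_integrableOn_Ioi]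
  have heven : (fun t : ℝ => halfPoisson x (-t)) = halfPoisson x := by
    funext t; simp [halfPoisson, mul_neg]
  have h_map_neg : ((volume : Measure ℝ).restrict (Set.Ici 0)).map Neg.neg
      = (volume : Measure ℝ).restrict (Set.Iic 0) := by
    conv => rhs; rw [← Measure.map_neg_eq_self (volume : Measure ℝ),
      measurableEmbedding_neg.restrict_map]
    simp
  have hIic : MeasureTheory.IntegrableOn (halfPoisson x) (Set.Iic 0) := by
    rw [MeasureTheory.IntegrableOn, ← h_map_neg, measurableEmbedding_neg.integrable_map_iff]
    have : halfPoisson x ∘ Neg.neg = halfPoisson x := heven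
    rw [this]; exact hIci
  have hInt : MeasureTheory.Integrable (halfPoisson x) := by
    rw [← MeasureTheory.integrableOn_univ, ← Set.Iic_union_Ici (a := (0:ℝ)),
      MeasureTheory.integrableOn_union]
    exact ⟨hIic, hIci⟩
  have := MeasureTheory.integral_of_hasDerivAt_of_tendsto hderiv hInt hbot htop
  rw [this]; ring
end

section
/- A map f from an open set U ⊆ ℂ into a complex Banach space B is analytic (norm-differentiable) if and only if for every bounded linear functional Λ on B, the scalar function z ↦ Λ(f(z)) is analytic on U. -/
open Metric Set Filter NormedSpace Topology

/-- For each functional `Λ`, the slope of `Λ ∘ f` at `z₀` is Lipschitz near `z₀`,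
with a constant depending on `Λ`. -/
lemma weak_slope_lipschitz {B : Type*} [NormedAddCommGroup B] [NormedSpace ℂ B]
    {f : ℂ → B} {z₀ : ℂ} {r : ℝ} (hr : 0 < r) (Λ : B →L[ℂ] ℂ)
    (hΛ : DifferentiableOn ℂ (fun z => Λ (f z)) (ball z₀ r)) :
    ∃ C : ℝ, ∀ z ∈ closedBall z₀ (r / 2), ∀ w ∈ closedBall z₀ (r / 2),
      ‖dslope (fun z => Λ (f z)) z₀ z - dslope (fun z => Λ (f z)) z₀ w‖ ≤ C * ‖z - w‖ := by
  set q : ℂ → ℂ := dslope (fun z => Λ (f z)) z₀ with hq_def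
  have hq : DifferentiableOn ℂ q (ball z₀ r) :=
    (Complex.differentiableOn_dslope (isOpen_ball.mem_nhds (mem_ball_self hr))).mpr hΛ
  have hKsub : closedBall z₀ (r / 2) ⊆ ball z₀ r :=
    closedBall_subset_ball (by linarith)
  have hderiv : ContinuousOn (deriv q) (ball z₀ r) :=
    ((hq.analyticOnNhd isOpen_ball).deriv_of_isOpen isOpen_ball).continuousOn
  obtain ⟨C, hC⟩ := (isCompact_closedBall z₀ (r / 2)).exists_bound_of_continuousOn
    (hderiv.mono hKsub)
  refine ⟨C, fun z hz w hw => ?_⟩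
  have := (convex_closedBall z₀ (r / 2)).norm_image_sub_le_of_norm_deriv_le
    (f := q) (fun x hx => hq.differentiableAt (isOpen_ball.mem_nhds (hKsub hx)))
    (fun x hx => hC x hx) hw hz
  simpa using this

theorem stmt9 {B : Type*} [NormedAddCommGroup B] [NormedSpace ℂ B] [CompleteSpace B]
    (U : Set ℂ) (hU : IsOpen U) (f : ℂ → B) :
    DifferentiableOn ℂ f U ↔
      ∀ Λ : B →L[ℂ] ℂ, DifferentiableOn ℂ (fun z => Λ (f z)) U := by
  constructor
  · intro hf Λ
    exact Λ.differentiable.comp_differentiableOn hf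
  · intro h z₀ hz₀
    obtain ⟨r, hr, hball⟩ := Metric.isOpen_iff.mp hU z₀ hz₀
    set K : Set ℂ := closedBall z₀ (r / 2) with hK_def
    -- the second difference quotient as a family of vectors in B
    set v : ℂ → ℂ → B := fun z w => (z - w)⁻¹ • (slope f z₀ z - slope f z₀ w) with hv_def
    set ι : Type _ := {p : ℂ × ℂ // p.1 ∈ K ∧ p.2 ∈ K ∧ p.1 ≠ z₀ ∧ p.2 ≠ z₀} with hι_def
    set g : ι → StrongDual ℂ (StrongDual ℂ B) := fun i =>
      inclusionInDoubleDual ℂ B (v i.1.1 i.1.2) with hg_def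
    -- pointwise bound for each Λ
    have hpt : ∀ Λ : StrongDual ℂ B, ∃ C, ∀ i : ι, ‖g i Λ‖ ≤ C := by
      intro Λ
      obtain ⟨C, hC⟩ := weak_slope_lipschitz hr Λ ((h Λ).mono hball)
      refine ⟨max C 0, fun i => ?_⟩
      obtain ⟨⟨z, w⟩, hz, hw, hz0, hw0⟩ := i
      simp only [hg_def, dual_def]
      have hΛv : Λ (v z w) = (z - w)⁻¹ • (dslope (fun z => Λ (f z)) z₀ z
          - dslope (fun z => Λ (f z)) z₀ w) := by
        rw [dslope_of_ne _ hz0, dslope_of_ne _ hw0]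
        simp [hv_def, slope, map_smul, map_sub, smul_sub]
        ring
      rcases eq_or_ne z w with rfl | hzw
      · simp [hΛv]
      · rw [hΛv, norm_smul, norm_inv]
        have hC' := hC z hz w hw
        have hzw' : (0:ℝ) < ‖z - w‖ := by
          simpa [sub_eq_zero] using hzw
        calc ‖z - w‖⁻¹ * ‖dslope (fun z => Λ (f z)) z₀ z - dslope (fun z => Λ (f z)) z₀ w‖
            ≤ ‖z - w‖⁻¹ * (C * ‖z - w‖) := by
              gcongr
          _ = C := by
              rw [inv_mul_eq_div, mul_div_assoc, div_self hzw'.ne', mul_one]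
          _ ≤ max C 0 := le_max_left _ _
    -- Banach–Steinhaus gives a uniform bound
    obtain ⟨M, hM⟩ := banach_steinhaus hpt
    have hMnorm : ∀ i : ι, ‖v i.1.1 i.1.2‖ ≤ M := by
      intro i
      have : ‖g i‖ = ‖v i.1.1 i.1.2‖ :=
        (inclusionInDoubleDualLi ℂ (E := B)).norm_map _
      rw [← this]; exact hM i
    have hM0 : 0 ≤ M := le_trans (norm_nonneg _) (hMnorm ⟨(z₀ + r/2, z₀ + r/2),
      by simp [hK_def, abs_of_nonneg hr.le, le_refl, div_nonneg hr.le],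
      by simp [hK_def, abs_of_nonneg hr.le, le_refl, div_nonneg hr.le],
      by simp [hr.ne'], by simp [hr.ne']⟩)
    -- the slope is Lipschitz with constant M on the punctured closed ball
    have hLip : ∀ z ∈ K, ∀ w ∈ K, z ≠ z₀ → w ≠ z₀ →
        ‖slope f z₀ z - slope f z₀ w‖ ≤ M * ‖z - w‖ := by
      intro z hz w hw hz0 hw0
      rcases eq_or_ne z w with rfl | hzw
      · simp
      have hzw' : z - w ≠ 0 := sub_ne_zero.mpr hzw
      have h1 : slope f z₀ z - slope f z₀ w = (z - w) • v z w := by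
        simp [hv_def, smul_smul, mul_inv_cancel₀ hzw']
      rw [h1, norm_smul]
      rw [mul_comm]
      gcongr
      exact hMnorm ⟨(z, w), hz, hw, hz0, hw0⟩
    -- the filter of slopes is Cauchy, hence has a limit L
    have hne : (𝓝[≠] z₀).NeBot := Module.punctured_nhds_neBot ℂ ℂ z₀
    have hcauchy : Cauchy ((𝓝[≠] z₀).map (slope f z₀)) := by
      rw [Metric.cauchy_iff]
      refine ⟨map_neBot, fun ε hε => ?_⟩
      set δ : ℝ := min (r / 2) (ε / (2 * (M + 1))) with hδ_def
      have hδpos : 0 < δ :=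
        lt_min (by linarith) (div_pos hε (by linarith))
      refine ⟨slope f z₀ '' (ball z₀ δ \ {z₀}), ?_, ?_⟩
      · rw [mem_map]
        refine mem_of_superset ?_ (subset_preimage_image _ _)
        exact diff_mem_nhdsWithin_compl (ball_mem_nhds _ hδpos) {z₀}
      · rintro x ⟨a, ⟨ha, ha0⟩, rfl⟩ y ⟨b, ⟨hb, hb0⟩, rfl⟩
        have haK : a ∈ K := closedBall_subset_closedBall (min_le_left _ _)
          (ball_subset_closedBall ha)
        have hbK : b ∈ K := closedBall_subset_closedBall (min_le_left _ _)
          (ball_subset_closedBall hb)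
        have hab : ‖a - b‖ < 2 * δ := by
          have h1 : dist a z₀ < δ := ha
          have h2 : dist b z₀ < δ := hb
          have h3 := dist_triangle a z₀ b
          rw [← dist_eq_norm]
          rw [dist_comm z₀ b] at h3
          linarith
        have := hLip a haK b hbK (by simpa using ha0) (by simpa using hb0)
        rw [dist_eq_norm]
        calc ‖slope f z₀ a - slope f z₀ b‖ ≤ M * ‖a - b‖ := this
          _ ≤ M * (2 * δ) := by gcongr
          _ ≤ M * (2 * (ε / (2 * (M + 1)))) := by gcongr; exact min_le_right _ _
          _ = ε * (M / (M + 1)) := by field_simp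
          _ < ε * 1 := by
              apply mul_lt_mul_of_pos_left _ hε
              rw [div_lt_one (by linarith)]; linarith
          _ = ε := mul_one ε
    obtain ⟨L, hL⟩ := CompleteSpace.complete hcauchy
    have hderiv : HasDerivAt f L z₀ := hasDerivAt_iff_tendsto_slope.mpr hL
    exact hderiv.differentiableAt.differentiableWithinAt
end
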